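/- Let Λ, α, ω, φ, ρ ≥ 0 and μ > 0, and set ξ₁ = α + μ + d (with d ≥ 0), ξ₂ = ω + μ, ξ₃ = ρ + φ + μ. Suppose S, I, C, A : [0,∞) → ℝ are differentiable and satisfy, for all t ≥ 0, the pathwise drift equations (S + I)'(t) = Λ − μ S(t) − ξ₃ I(t) + α A(t) + ω C(t), C'(t) = φ I(t) − ξ₂ C(t), and A'(t) = ρ I(t) − ξ₁ A(t). Then for every t > 0, (1/t)∫₀ᵗ S(s) ds = Λ/μ + (1/μ)(αρ/ξ₁ − ξ₃ + ωφ/ξ₂)·(1/t)∫₀ᵗ I(s) ds − K(t)/μ, where K(t) = [ (S(t)−S(0)) + (I(t)−I(0)) + (α/ξ₁)(A(t)−A(0)) + (ω/ξ₂)(C(t)−C(0)) ] / t. -/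

import Mathlib

/-- Time-average identity (key identity (p1) in the persistence proof):
for every `t > 0`,
`(1/t)∫₀ᵗ S = Λ/μ + (1/μ)(αρ/ξ₁ − ξ₃ + ωφ/ξ₂)(1/t)∫₀ᵗ I − K(t)/μ`,
where `K(t) = [(S(t)−S(0)) + (I(t)−I(0)) + (α/ξ₁)(A(t)−A(0)) +
(ω/ξ₂)(C(t)−C(0))]/t`. -/
theorem stmt_10 (Λ μ d α ω φ ρ : ℝ)
    (hΛ : 0 ≤ Λ) (hμ : 0 < μ) (hd : 0 ≤ d) (hα : 0 ≤ α)
    (hω : 0 ≤ ω) (hφ : 0 ≤ φ) (hρ : 0 ≤ ρ)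
    (S I C A : ℝ → ℝ)
    (hS : ∀ t ≥ (0:ℝ), DifferentiableAt ℝ S t)
    (hI : ∀ t ≥ (0:ℝ), DifferentiableAt ℝ I t)
    (hCd : ∀ t ≥ (0:ℝ), DifferentiableAt ℝ C t)
    (hAd : ∀ t ≥ (0:ℝ), DifferentiableAt ℝ A t)
    (hSI : ∀ t ≥ (0:ℝ), HasDerivAt (fun s => S s + I s)
      (Λ - μ * S t - (ρ + φ + μ) * I t + α * A t + ω * C t) t)
    (hC : ∀ t ≥ (0:ℝ), HasDerivAt C (φ * I t - (ω + μ) * C t) t)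
    (hA : ∀ t ≥ (0:ℝ), HasDerivAt A (ρ * I t - (α + μ + d) * A t) t) :
    ∀ t > (0:ℝ),
      (1 / t) * ∫ s in (0:ℝ)..t, S s =
        Λ / μ
        + (1 / μ) * (α * ρ / (α + μ + d) - (ρ + φ + μ) + ω * φ / (ω + μ))
            * ((1 / t) * ∫ s in (0:ℝ)..t, I s)
        - (((S t - S 0) + (I t - I 0) + (α / (α + μ + d)) * (A t - A 0)
            + (ω / (ω + μ)) * (C t - C 0)) / t) / μ := by
  intro t ht
  have hξ1 : (0:ℝ) < α + μ + d := by linarith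
  have hξ2 : (0:ℝ) < ω + μ := by linarith
  set c : ℝ := α * ρ / (α + μ + d) - (ρ + φ + μ) + ω * φ / (ω + μ) with hc
  set G : ℝ → ℝ := fun s => (S s + I s) + (α / (α + μ + d)) * A s
      + (ω / (ω + μ)) * C s with hG
  have hmem : ∀ x ∈ Set.uIcc (0:ℝ) t, (0:ℝ) ≤ x := by
    intro x hx
    rw [Set.uIcc_of_le ht.le] at hx
    exact hx.1
  have hderiv : ∀ x ∈ Set.uIcc (0:ℝ) t,
      HasDerivAt G (Λ - μ * S x + c * I x) x := by
    intro x hx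
    have h0 := hmem x hx
    have h := ((hSI x h0).add ((hA x h0).const_mul (α / (α + μ + d)))).add
      ((hC x h0).const_mul (ω / (ω + μ)))
    have h1 : α + μ + d ≠ 0 := ne_of_gt hξ1
    have h2 : ω + μ ≠ 0 := ne_of_gt hξ2
    have e1 : α / (α + μ + d) * (α + μ + d) = α := div_mul_cancel₀ α h1
    have e2 : ω / (ω + μ) * (ω + μ) = ω := div_mul_cancel₀ ω h2
    refine HasDerivAt.congr_deriv h (Eq.symm ?_)
    rw [hc]
    linear_combination (A x) * e1 + (C x) * e2
  have hScont : ContinuousOn S (Set.uIcc 0 t) := fun x hx =>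
    ((hS x (hmem x hx)).continuousAt).continuousWithinAt
  have hIcont : ContinuousOn I (Set.uIcc 0 t) := fun x hx =>
    ((hI x (hmem x hx)).continuousAt).continuousWithinAt
  have hSint : IntervalIntegrable S MeasureTheory.volume 0 t :=
    hScont.intervalIntegrable
  have hIint : IntervalIntegrable I MeasureTheory.volume 0 t :=
    hIcont.intervalIntegrable
  have hint : IntervalIntegrable (fun x => Λ - μ * S x + c * I x)
      MeasureTheory.volume 0 t := by
    apply IntervalIntegrable.add
    · exact (intervalIntegrable_const).sub (hSint.const_mul μ)
    · exact hIint.const_mul c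
  have hftc := intervalIntegral.integral_eq_sub_of_hasDerivAt hderiv hint
  have hsplit : ∫ x in (0:ℝ)..t, (Λ - μ * S x + c * I x) =
      (Λ * t - μ * ∫ x in (0:ℝ)..t, S x) + c * ∫ x in (0:ℝ)..t, I x := by
    rw [intervalIntegral.integral_add ((intervalIntegrable_const).sub
        (hSint.const_mul μ)) (hIint.const_mul c),
      intervalIntegral.integral_sub intervalIntegrable_const (hSint.const_mul μ),
      intervalIntegral.integral_const_mul, intervalIntegral.integral_const_mul,
      intervalIntegral.integral_const]
    simp [smul_eq_mul]
    ring
  rw [hsplit] at hftc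
  have hGt : G t - G 0 = (S t - S 0) + (I t - I 0)
      + (α / (α + μ + d)) * (A t - A 0) + (ω / (ω + μ)) * (C t - C 0) := by
    simp only [hG]; ring
  rw [hGt] at hftc
  have htne : t ≠ 0 := ne_of_gt ht
  have hμne : μ ≠ 0 := ne_of_gt hμ
  set D : ℝ := (S t - S 0) + (I t - I 0) + (α / (α + μ + d)) * (A t - A 0)
      + (ω / (ω + μ)) * (C t - C 0) with hD
  have hIntS : ∫ s in (0:ℝ)..t, S s
      = (Λ * t + c * (∫ s in (0:ℝ)..t, I s) - D) / μ := by
    rw [eq_div_iff hμne]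
    linarith [hftc]
  rw [hIntS]
  field_simp
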